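/- Let E be a Banach space and A a closed densely defined linear operator on E such that (-∞,0] is contained in the resolvent set of A and there is C ≥ 1 with ‖(λI + A)^{-1}‖ ≤ C/(1+λ) for all λ ≥ 0. Then for every z with Re z ∈ (0,1) the integral ∫₀^∞ t^{-Re z} ‖(tI+A)^{-1}x‖ dt converges for every x ∈ E, so the Balakrishnan formula A^{-z}x = (sin πz / π) ∫₀^∞ t^{-z}(tI+A)^{-1} x dt defines a bounded linear operator A^{-z} on E. -/

import Mathlib

open MeasureTheory Real

/-- The weight function `t ↦ t^(-a) * (C/(1+t))` is integrable on `(0,∞)` when `0 < a < 1`. -/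
lemma weight_integrable (a C : ℝ) (ha : a ∈ Set.Ioo (0:ℝ) 1) :
    IntegrableOn (fun t : ℝ => t ^ (-a) * (C / (1 + t))) (Set.Ioi 0) := by
  obtain ⟨ha0, ha1⟩ := ha
  have hmeas : ContinuousOn (fun t : ℝ => t ^ (-a) * (C / (1 + t))) (Set.Ioi 0) := by
    apply ContinuousOn.mul
    · exact fun t ht =>
        (Real.continuousAt_rpow_const t (-a) (Or.inl (ne_of_gt ht))).continuousWithinAt
    · apply ContinuousOn.div continuousOn_const (by fun_prop)
      intro t ht
      have : (0:ℝ) < t := ht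
      positivity
  have h01 : IntegrableOn (fun t : ℝ => t ^ (-a) * (C / (1 + t))) (Set.Ioc 0 1) := by
    have hint : IntegrableOn (fun t : ℝ => |C| * t ^ (-a)) (Set.Ioc 0 1) := by
      apply Integrable.const_mul
      have := intervalIntegral.intervalIntegrable_rpow' (a := 0) (b := 1) (r := -a)
        (by linarith)
      rwa [intervalIntegrable_iff_integrableOn_Ioc_of_le zero_le_one] at this
    apply hint.mono'
      ((hmeas.mono Set.Ioc_subset_Ioi_self).aestronglyMeasurable measurableSet_Ioc)
    filter_upwards [ae_restrict_mem measurableSet_Ioc] with t ht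
    have ht0 : (0:ℝ) < t := ht.1
    rw [Real.norm_eq_abs, abs_mul, abs_of_nonneg (Real.rpow_nonneg ht0.le _)]
    have hC1 : |C / (1 + t)| ≤ |C| := by
      rw [abs_div, abs_of_nonneg (by linarith : (0:ℝ) ≤ 1 + t)]
      exact div_le_self (abs_nonneg C) (by linarith)
    calc t ^ (-a) * |C / (1 + t)| ≤ t ^ (-a) * |C| :=
          mul_le_mul_of_nonneg_left hC1 (Real.rpow_nonneg ht0.le _)
      _ = |C| * t ^ (-a) := mul_comm _ _
  have h1inf : IntegrableOn (fun t : ℝ => t ^ (-a) * (C / (1 + t))) (Set.Ioi 1) := by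
    have hint : IntegrableOn (fun t : ℝ => |C| * t ^ (-a - 1)) (Set.Ioi 1) := by
      apply Integrable.const_mul
      exact integrableOn_Ioi_rpow_of_lt (by linarith) one_pos
    apply hint.mono'
      ((hmeas.mono (Set.Ioi_subset_Ioi zero_le_one)).aestronglyMeasurable measurableSet_Ioi)
    filter_upwards [ae_restrict_mem measurableSet_Ioi] with t (ht : (1:ℝ) < t)
    have ht0 : (0:ℝ) < t := lt_trans one_pos ht
    rw [Real.norm_eq_abs, abs_mul, abs_of_nonneg (Real.rpow_nonneg ht0.le _)]
    have hC1 : |C / (1 + t)| ≤ |C| * t⁻¹ := by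
      rw [abs_div, abs_of_nonneg (by linarith : (0:ℝ) ≤ 1 + t), ← div_eq_mul_inv]
      exact div_le_div_of_nonneg_left (abs_nonneg C) ht0 (by linarith)
    calc t ^ (-a) * |C / (1 + t)| ≤ t ^ (-a) * (|C| * t⁻¹) :=
          mul_le_mul_of_nonneg_left hC1 (Real.rpow_nonneg ht0.le _)
      _ = |C| * (t ^ (-a) * t ^ (-1 : ℝ)) := by rw [Real.rpow_neg_one]; ring
      _ = |C| * t ^ (-a - 1) := by rw [← Real.rpow_add ht0]; ring_nf
  have : Set.Ioi (0:ℝ) = Set.Ioc 0 1 ∪ Set.Ioi 1 := (Set.Ioc_union_Ioi_eq_Ioi zero_le_one).symm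
  rw [this]
  exact h01.union h1inf

/-- Balakrishnan formula for negative fractional powers of a positive operator:
if `A` is closed, densely defined, with `(-∞,0] ⊂ ρ(A)` and resolvent bound
`‖(tI+A)⁻¹‖ ≤ C/(1+t)` for `t ≥ 0`, then for `Re z ∈ (0,1)` the integral
`∫₀^∞ t^{-Re z} ‖(tI+A)⁻¹x‖ dt` converges for every `x`, and
`A^{-z}x = (sin πz/π) ∫₀^∞ t^{-z} (tI+A)⁻¹ x dt` defines a bounded operator. -/
theorem stmt8
    {E : Type} [NormedAddCommGroup E] [NormedSpace ℂ E] [CompleteSpace E]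
    (A : E →ₗ.[ℂ] E) (hdense : Dense (A.domain : Set E)) (hclosed : A.IsClosed)
    (R : ℝ → E →L[ℂ] E) (C : ℝ) (hC : 1 ≤ C)
    (hres1 : ∀ t : ℝ, 0 ≤ t → ∀ x : A.domain, R t ((t : ℂ) • (x : E) + A x) = x)
    (hres2 : ∀ t : ℝ, 0 ≤ t → ∀ y : E,
      ∃ hy : R t y ∈ A.domain, (t : ℂ) • R t y + A ⟨R t y, hy⟩ = y)
    (hbound : ∀ t : ℝ, 0 ≤ t → ‖R t‖ ≤ C / (1 + t))
    (z : ℂ) (hz : z.re ∈ Set.Ioo (0 : ℝ) 1) :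
    (∀ x : E, IntegrableOn (fun t : ℝ => t ^ (-z.re) * ‖R t x‖) (Set.Ioi 0)) ∧
      ∃ B : E →L[ℂ] E, ∀ x : E,
        B x = (Complex.sin ((π : ℂ) * z) / (π : ℂ)) •
          ∫ t in Set.Ioi (0 : ℝ), ((t : ℂ) ^ (-z)) • R t x := by
  obtain ⟨hz0, hz1⟩ := hz
  have hC0 : (0:ℝ) < C := lt_of_lt_of_le one_pos hC
  -- uniform bound ‖R t‖ ≤ C
  have hRC : ∀ t : ℝ, 0 ≤ t → ‖R t‖ ≤ C := by
    intro t ht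
    refine (hbound t ht).trans ?_
    exact div_le_self hC0.le (by linarith)
  -- resolvent identity
  have key : ∀ t s : ℝ, 0 ≤ t → 0 ≤ s → ∀ y : E,
      R t y = R s y - ((t : ℂ) - s) • R t (R s y) := by
    intro t s ht hs y
    obtain ⟨hy, heq⟩ := hres2 s hs y
    have h1 : R t ((t : ℂ) • (R s y) + A ⟨R s y, hy⟩) = R s y := hres1 t ht ⟨R s y, hy⟩
    have h2 : (t : ℂ) • (R s y) + (A ⟨R s y, hy⟩ : E) =
        ((t : ℂ) - s) • R s y + ((s : ℂ) • R s y + (A ⟨R s y, hy⟩ : E)) := by module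
    rw [heq] at h2
    rw [h2, map_add, (R t).map_smul] at h1
    exact eq_sub_of_add_eq' h1
  -- continuity of t ↦ R t x on (0,∞)
  have hcont : ∀ x : E, ContinuousOn (fun t : ℝ => R t x) (Set.Ioi 0) := by
    intro x
    have hlip : LipschitzOnWith (C * C * ‖x‖).toNNReal (fun t : ℝ => R t x) (Set.Ici 0) := by
      apply LipschitzOnWith.of_dist_le_mul
      intro t ht s hs
      have hkey := key t s ht hs x
      have hdiff : R t x - R s x = -(((t : ℂ) - s) • R t (R s x)) := by
        rw [hkey]; abel
      rw [dist_eq_norm, hdiff, norm_neg, norm_smul]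
      have habs : ‖((t : ℂ) - s)‖ = dist t s := by
        rw [dist_eq_norm, ← Complex.ofReal_sub, Complex.norm_real]
      rw [habs, Real.coe_toNNReal _ (by positivity)]
      have h1 : ‖R t (R s x)‖ ≤ C * (C * ‖x‖) := by
        calc ‖R t (R s x)‖ ≤ ‖R t‖ * ‖R s x‖ := (R t).le_opNorm _
          _ ≤ C * (C * ‖x‖) := by
              apply mul_le_mul (hRC t ht) ?_ (norm_nonneg _) hC0.le
              calc ‖R s x‖ ≤ ‖R s‖ * ‖x‖ := (R s).le_opNorm _
                _ ≤ C * ‖x‖ := mul_le_mul_of_nonneg_right (hRC s hs) (norm_nonneg _)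
      calc dist t s * ‖R t (R s x)‖ ≤ dist t s * (C * (C * ‖x‖)) :=
            mul_le_mul_of_nonneg_left h1 dist_nonneg
        _ = C * C * ‖x‖ * dist t s := by ring
    exact (hlip.continuousOn).mono (fun t (ht : (0:ℝ) < t) => ht.le)
  -- the scalar weight
  have hweight : IntegrableOn (fun t : ℝ => t ^ (-z.re) * (C / (1 + t))) (Set.Ioi 0) :=
    weight_integrable z.re C ⟨hz0, hz1⟩
  -- pointwise bound on ‖R t x‖
  have hptbd : ∀ (x : E) (t : ℝ), 0 < t → ‖R t x‖ ≤ C / (1 + t) * ‖x‖ := by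
    intro x t ht
    calc ‖R t x‖ ≤ ‖R t‖ * ‖x‖ := (R t).le_opNorm _
      _ ≤ C / (1 + t) * ‖x‖ := mul_le_mul_of_nonneg_right (hbound t ht.le) (norm_nonneg _)
  -- first conclusion
  have hInt : ∀ x : E, IntegrableOn (fun t : ℝ => t ^ (-z.re) * ‖R t x‖) (Set.Ioi 0) := by
    intro x
    have hmeas : ContinuousOn (fun t : ℝ => t ^ (-z.re) * ‖R t x‖) (Set.Ioi 0) := by
      apply ContinuousOn.mul
      · exact fun t ht =>
          (Real.continuousAt_rpow_const t _ (Or.inl (ne_of_gt ht))).continuousWithinAt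
      · exact (hcont x).norm
    apply (hweight.mul_const ‖x‖).mono' (hmeas.aestronglyMeasurable measurableSet_Ioi)
    filter_upwards [ae_restrict_mem measurableSet_Ioi] with t (ht : (0:ℝ) < t)
    rw [Real.norm_eq_abs, abs_mul, abs_of_nonneg (Real.rpow_nonneg ht.le _),
      abs_of_nonneg (norm_nonneg _), mul_assoc]
    exact mul_le_mul_of_nonneg_left (hptbd x t ht) (Real.rpow_nonneg ht.le _)
  refine ⟨hInt, ?_⟩
  -- vector-valued integrand
  have hFnorm : ∀ (x : E) (t : ℝ), 0 < t →
      ‖((t : ℂ) ^ (-z)) • R t x‖ = t ^ (-z.re) * ‖R t x‖ := by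
    intro x t ht
    simp only [norm_smul,
      Complex.norm_cpow_eq_rpow_re_of_pos ht, Complex.neg_re]
  have hFmeas : ∀ x : E, AEStronglyMeasurable (fun t : ℝ => ((t : ℂ) ^ (-z)) • R t x)
      (volume.restrict (Set.Ioi 0)) := by
    intro x
    apply ContinuousOn.aestronglyMeasurable _ measurableSet_Ioi
    apply ContinuousOn.smul _ (hcont x)
    exact fun t (ht : (0:ℝ) < t) =>
      (Complex.continuousAt_ofReal_cpow_const _ _ (Or.inr (ne_of_gt ht))).continuousWithinAt
  have hFint : ∀ x : E, IntegrableOn (fun t : ℝ => ((t : ℂ) ^ (-z)) • R t x) (Set.Ioi 0) := by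
    intro x
    apply (hInt x).mono' (hFmeas x)
    filter_upwards [ae_restrict_mem measurableSet_Ioi] with t (ht : (0:ℝ) < t)
    rw [hFnorm x t ht]
  -- the linear map
  let L : E →ₗ[ℂ] E :=
    { toFun := fun x => ∫ t in Set.Ioi (0:ℝ), ((t : ℂ) ^ (-z)) • R t x
      map_add' := by
        intro x y
        have heq : ∀ t : ℝ, ((t : ℂ) ^ (-z)) • R t (x + y) =
            ((t : ℂ) ^ (-z)) • R t x + ((t : ℂ) ^ (-z)) • R t y := by
          intro t; rw [map_add, smul_add]
        simp_rw [heq]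
        exact integral_add (hFint x) (hFint y)
      map_smul' := by
        intro c x
        have heq : ∀ t : ℝ, ((t : ℂ) ^ (-z)) • R t (c • x) =
            c • (((t : ℂ) ^ (-z)) • R t x) := by
          intro t; rw [(R t).map_smul, smul_comm]
        simp_rw [heq]
        exact integral_smul c _ }
  have hLbound : ∀ x : E,
      ‖L x‖ ≤ (∫ t in Set.Ioi (0:ℝ), t ^ (-z.re) * (C / (1 + t))) * ‖x‖ := by
    intro x
    rw [← integral_mul_const]
    apply norm_integral_le_of_norm_le (hweight.mul_const ‖x‖)
    filter_upwards [ae_restrict_mem measurableSet_Ioi] with t (ht : (0:ℝ) < t)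
    show ‖((t : ℂ) ^ (-z)) • R t x‖ ≤ _
    rw [hFnorm x t ht, mul_assoc]
    exact mul_le_mul_of_nonneg_left (hptbd x t ht) (Real.rpow_nonneg ht.le _)
  refine ⟨(Complex.sin ((π : ℂ) * z) / (π : ℂ)) • (L.mkContinuous _ hLbound), fun x => ?_⟩
  rfl
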